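/- For density matrices ρ and σ with supp(ρ) ⊆ supp(σ) on a finite-dimensional Hilbert space, -2 log₂ F(ρ,σ) ≤ D(ρ‖σ), where F is the fidelity and D(ρ‖σ) = tr(ρ(log₂ ρ - log₂ σ)) is the quantum relative entropy. -/

import Mathlib

open Matrix
open scoped ComplexOrder

/-- Base-2 matrix logarithm of a Hermitian matrix, defined through its spectral
decomposition. -/
noncomputable def matLog2 {n : Type*} [Fintype n] [DecidableEq n]
    {A : Matrix n n ℂ} (hA : A.IsHermitian) : Matrix n n ℂ :=
  (hA.eigenvectorUnitary : Matrix n n ℂ) *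
    Matrix.diagonal (fun i => (Real.logb 2 (hA.eigenvalues i) : ℂ)) *
    star (hA.eigenvectorUnitary : Matrix n n ℂ)

/-- The positive semidefinite square root of a positive semidefinite matrix
(the definition `Matrix.PosSemidef.sqrt` of the older Mathlib, since removed). -/
noncomputable def Matrix.PosSemidef.sqrt {n : Type*} {𝕜 : Type*} [Fintype n] [RCLike 𝕜]
    [DecidableEq n] {A : Matrix n n 𝕜} (hA : A.PosSemidef) : Matrix n n 𝕜 :=
  hA.1.eigenvectorUnitary.1 * diagonal ((↑) ∘ (√·) ∘ hA.1.eigenvalues) *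
  (star hA.1.eigenvectorUnitary : Matrix n n 𝕜)

lemma Matrix.PosSemidef.sqrt_isHermitian' {n : Type*} [Fintype n] [DecidableEq n]
    {A : Matrix n n ℂ} (hA : A.PosSemidef) : hA.sqrt.IsHermitian := by
  unfold Matrix.PosSemidef.sqrt
  simp [Matrix.IsHermitian, Matrix.conjTranspose_mul, Matrix.diagonal_conjTranspose,
    Matrix.mul_assoc, Function.comp_def, Matrix.star_eq_conjTranspose]
  congr 3
  funext i
  simp

lemma Matrix.PosSemidef.sqrt_mul_self' {n : Type*} [Fintype n] [DecidableEq n]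
    {A : Matrix n n ℂ} (hA : A.PosSemidef) : hA.sqrt * hA.sqrt = A := by
  have hU : (star hA.1.eigenvectorUnitary : Matrix n n ℂ) * hA.1.eigenvectorUnitary.1 = 1 :=
    Matrix.UnitaryGroup.star_mul_self _
  unfold Matrix.PosSemidef.sqrt
  simp only [Matrix.mul_assoc]
  rw [← Matrix.mul_assoc (star (hA.1.eigenvectorUnitary : Matrix n n ℂ))
    (hA.1.eigenvectorUnitary : Matrix n n ℂ), hU, Matrix.one_mul,
    ← Matrix.mul_assoc (diagonal _) (diagonal _), Matrix.diagonal_mul_diagonal]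
  conv_rhs => rw [hA.1.spectral_theorem, Unitary.conjStarAlgAut_apply, Matrix.mul_assoc]
  refine congrArg₂ (· * ·) rfl (congrArg₂ (· * ·) ?_ rfl)
  congr 1
  funext i
  simp only [Function.comp_apply]
  rw [← RCLike.ofReal_mul, Real.mul_self_sqrt (hA.eigenvalues_nonneg i)]


section Helpers

variable {n : Type*} [Fintype n] [DecidableEq n]

lemma trace_DWEW (W : Matrix n n ℂ) (d e : n → ℂ) :
    (Matrix.diagonal d * W * Matrix.diagonal e * Wᴴ).trace
      = ∑ i, ∑ j, d i * e j * (Complex.normSq (W i j) : ℂ) := by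
  simp only [Matrix.trace, Matrix.diag_apply, Matrix.mul_apply, Matrix.diagonal_apply,
    Matrix.conjTranspose_apply, ite_mul, zero_mul, Finset.sum_ite_eq, Finset.mem_univ, if_true,
    mul_ite, mul_zero, RCLike.star_def, Finset.sum_ite_eq', ite_mul]
  refine Finset.sum_congr rfl fun i _ => Finset.sum_congr rfl fun j _ => ?_
  rw [← Complex.mul_conj]
  ring

lemma trace_conj_mul_conj (U V : Matrix n n ℂ) (d e : n → ℂ) :
    ((U * Matrix.diagonal d * Uᴴ) * (V * Matrix.diagonal e * Vᴴ)).trace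
      = ∑ i, ∑ j, d i * e j * (Complex.normSq ((Uᴴ * V) i j) : ℂ) := by
  rw [show (U * Matrix.diagonal d * Uᴴ) * (V * Matrix.diagonal e * Vᴴ)
      = U * (Matrix.diagonal d * (Uᴴ * (V * (Matrix.diagonal e * Vᴴ))))
      by simp only [Matrix.mul_assoc], Matrix.trace_mul_comm, ← trace_DWEW (Uᴴ * V) d e]
  congr 1
  simp only [Matrix.conjTranspose_mul, Matrix.conjTranspose_conjTranspose, Matrix.mul_assoc]

lemma trace_conj_unitary (U : Matrix.unitaryGroup n ℂ) (d : n → ℂ) :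
    ((U : Matrix n n ℂ) * Matrix.diagonal d * (U : Matrix n n ℂ)ᴴ).trace = ∑ i, d i := by
  rw [Matrix.trace_mul_cycle, ← Matrix.star_eq_conjTranspose,
    Matrix.UnitaryGroup.star_mul_self, one_mul, Matrix.trace_diagonal]

lemma trace_conj_mul_conj_same (U : Matrix.unitaryGroup n ℂ) (d e : n → ℂ) :
    (((U : Matrix n n ℂ) * Matrix.diagonal d * (U : Matrix n n ℂ)ᴴ)
      * ((U : Matrix n n ℂ) * Matrix.diagonal e * (U : Matrix n n ℂ)ᴴ)).trace
      = ∑ i, d i * e i := by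
  have h : ((U : Matrix n n ℂ) * Matrix.diagonal d * (U : Matrix n n ℂ)ᴴ)
      * ((U : Matrix n n ℂ) * Matrix.diagonal e * (U : Matrix n n ℂ)ᴴ)
      = (U : Matrix n n ℂ) * Matrix.diagonal (d * e) * (U : Matrix n n ℂ)ᴴ := by
    calc ((U : Matrix n n ℂ) * Matrix.diagonal d * (U : Matrix n n ℂ)ᴴ)
        * ((U : Matrix n n ℂ) * Matrix.diagonal e * (U : Matrix n n ℂ)ᴴ)
        = (U : Matrix n n ℂ) * Matrix.diagonal d * ((U : Matrix n n ℂ)ᴴ * (U : Matrix n n ℂ))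
            * Matrix.diagonal e * (U : Matrix n n ℂ)ᴴ := by
          simp only [Matrix.mul_assoc]
      _ = _ := by
          rw [← Matrix.star_eq_conjTranspose, Matrix.UnitaryGroup.star_mul_self, Matrix.mul_one,
            Matrix.mul_assoc (U : Matrix n n ℂ), Matrix.diagonal_mul_diagonal,
            Matrix.star_eq_conjTranspose]
          rfl
  rw [h, trace_conj_unitary]
  simp [Pi.mul_apply]
lemma jensen_log {ι : Type*} [Fintype ι] (w t : ι → ℝ) (hw : ∀ i, 0 ≤ w i)
    (hw1 : ∑ i, w i = 1) (ht0 : ∀ i, 0 ≤ t i) (ht : ∀ i, 0 < w i → 0 < t i) :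
    ∑ i, w i * Real.log (t i) ≤ Real.log (∑ i, w i * t i) := by
  have hgm := Real.geom_mean_le_arith_mean_weighted Finset.univ w t
    (fun i _ => hw i) hw1 (fun i _ => ht0 i)
  have hfac : ∀ i, 0 < t i ^ w i := by
    intro i
    rcases eq_or_lt_of_le (hw i) with h | h
    · rw [← h, Real.rpow_zero]; exact one_pos
    · exact Real.rpow_pos_of_pos (ht i h) _
  calc ∑ i, w i * Real.log (t i) = Real.log (∏ i, t i ^ w i) := by
        rw [Real.log_prod (fun i _ => (hfac i).ne')]
        refine Finset.sum_congr rfl fun i _ => ?_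
        rcases eq_or_lt_of_le (hw i) with h | h
        · rw [← h, Real.rpow_zero, Real.log_one, zero_mul]
        · rw [Real.log_rpow (ht i h)]
      _ ≤ Real.log (∑ i, w i * t i) := Real.log_le_log (Finset.prod_pos fun i _ => hfac i) hgm

end Helpers

set_option maxHeartbeats 2000000 in
/-- For density matrices `ρ, σ` with `supp ρ ⊆ supp σ` (expressed as `ker σ ⊆ ker ρ`),
`-2 log₂ F(ρ,σ) ≤ D(ρ‖σ)` where `F(ρ,σ) = tr √(σ^{1/2} ρ σ^{1/2})` is the fidelity and
`D(ρ‖σ) = tr(ρ (log₂ ρ - log₂ σ))` is the quantum relative entropy. -/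
theorem stmt5 {n : Type*} [Fintype n] [DecidableEq n]
    (ρ σ : Matrix n n ℂ)
    (hρ : ρ.PosSemidef) (hσ : σ.PosSemidef)
    (hρ1 : ρ.trace = 1) (hσ1 : σ.trace = 1)
    (hsupp : ∀ v : n → ℂ, σ *ᵥ v = 0 → ρ *ᵥ v = 0)
    (hM : (hσ.sqrt * ρ * hσ.sqrt).PosSemidef) :
    -2 * Real.logb 2 ((hM.sqrt.trace).re) ≤
      ((ρ * (matLog2 hρ.1 - matLog2 hσ.1)).trace).re := by
  classical
  set p : n → ℝ := hρ.1.eigenvalues with hpdef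
  set q : n → ℝ := hσ.1.eigenvalues with hqdef
  set m : n → ℝ := hM.1.eigenvalues with hmdef
  set U : Matrix n n ℂ := ↑hρ.1.eigenvectorUnitary with hUdef
  set V : Matrix n n ℂ := ↑hσ.1.eigenvectorUnitary with hVdef
  set W : Matrix n n ℂ := Uᴴ * V with hWdef
  set Pr : n → n → ℝ := fun i j => Complex.normSq (W i j) with hPrdef
  have hUU : Uᴴ * U = 1 := by
    rw [hUdef, ← Matrix.star_eq_conjTranspose]; exact Matrix.UnitaryGroup.star_mul_self _
  have hUU' : U * Uᴴ = 1 := by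
    rw [hUdef, ← Matrix.star_eq_conjTranspose]; exact mem_unitaryGroup_iff.mp (SetLike.coe_mem _)
  have hVV' : V * Vᴴ = 1 := by
    rw [hVdef, ← Matrix.star_eq_conjTranspose]; exact mem_unitaryGroup_iff.mp (SetLike.coe_mem _)
  have hρspec : ρ = U * Matrix.diagonal (fun i => (p i : ℂ)) * Uᴴ := by
    simpa [Matrix.star_eq_conjTranspose, Function.comp_def] using hρ.1.spectral_theorem
  have hσspec : σ = V * Matrix.diagonal (fun i => (q i : ℂ)) * Vᴴ := by
    simpa [Matrix.star_eq_conjTranspose, Function.comp_def] using hσ.1.spectral_theorem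
  -- double stochasticity
  have hWW' : W * Wᴴ = 1 := by
    rw [hWdef, Matrix.conjTranspose_mul, Matrix.conjTranspose_conjTranspose,
      show Uᴴ * V * (Vᴴ * U) = Uᴴ * (V * Vᴴ) * U by simp only [Matrix.mul_assoc], hVV',
      Matrix.mul_one, hUU]
  have hProw : ∀ i, ∑ j, Pr i j = 1 := by
    intro i
    have h1 : (W * Wᴴ) i i = 1 := by rw [hWW']; simp
    rw [Matrix.mul_apply] at h1
    simp only [Matrix.conjTranspose_apply, RCLike.star_def, Complex.mul_conj] at h1
    have : ((∑ j, Pr i j : ℝ) : ℂ) = ((1:ℝ) : ℂ) := by push_cast; rw [← h1]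
    exact_mod_cast this
  have hpnn : ∀ i, 0 ≤ p i := fun i => hρ.eigenvalues_nonneg i
  have hqnn : ∀ i, 0 ≤ q i := fun i => hσ.eigenvalues_nonneg i
  have hmnn : ∀ i, 0 ≤ m i := fun i => hM.eigenvalues_nonneg i
  have hPrnn : ∀ i j, 0 ≤ Pr i j := fun i j => Complex.normSq_nonneg _
  -- sum of eigenvalues of ρ is 1
  have hpsum : ∑ i, p i = 1 := by
    have h1 := trace_conj_unitary hρ.1.eigenvectorUnitary (fun i => (p i : ℂ))
    rw [← hρspec] at h1
    have : ((∑ i, p i : ℝ) : ℂ) = ((1:ℝ) : ℂ) := by push_cast; rw [← h1, hρ1]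
    exact_mod_cast this
  -- closed forms of the matrix logs and sqrts
  have hLρ : matLog2 hρ.1 = U * Matrix.diagonal (fun i => (Real.logb 2 (p i) : ℂ)) * Uᴴ := by
    unfold matLog2; rw [Matrix.star_eq_conjTranspose]
  have hLσ : matLog2 hσ.1 = V * Matrix.diagonal (fun i => (Real.logb 2 (q i) : ℂ)) * Vᴴ := by
    unfold matLog2; rw [Matrix.star_eq_conjTranspose]
  have hSρ : hρ.sqrt = U * Matrix.diagonal (fun i => ((Real.sqrt (p i) : ℝ) : ℂ)) * Uᴴ := by
    unfold Matrix.PosSemidef.sqrt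
    simp only [Unitary.coe_star, Matrix.star_eq_conjTranspose, Function.comp_def]
    rfl
  have hSσ : hσ.sqrt = V * Matrix.diagonal (fun i => ((Real.sqrt (q i) : ℝ) : ℂ)) * Vᴴ := by
    unfold Matrix.PosSemidef.sqrt
    simp only [Unitary.coe_star, Matrix.star_eq_conjTranspose, Function.comp_def]
    rfl
  -- trace computations
  have hA : (ρ * matLog2 hρ.1).trace = ((∑ i, p i * Real.logb 2 (p i) : ℝ) : ℂ) := by
    rw [hLρ]
    rw [hρspec, trace_conj_mul_conj_same hρ.1.eigenvectorUnitary]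
    push_cast
    rfl
  have hB : (ρ * matLog2 hσ.1).trace
      = ((∑ i, ∑ j, p i * Real.logb 2 (q j) * Pr i j : ℝ) : ℂ) := by
    rw [hLσ]
    rw [hρspec, trace_conj_mul_conj]
    push_cast [hPrdef]
    rfl
  have hT : (hρ.sqrt * hσ.sqrt).trace
      = ((∑ i, ∑ j, Real.sqrt (p i) * Real.sqrt (q j) * Pr i j : ℝ) : ℂ) := by
    rw [hSρ, hSσ, trace_conj_mul_conj]
    push_cast [hPrdef]
    rfl
  have hF : hM.sqrt.trace = ((∑ k, Real.sqrt (m k) : ℝ) : ℂ) := by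
    unfold Matrix.PosSemidef.sqrt
    simp only [Unitary.coe_star, Matrix.star_eq_conjTranspose]
    rw [trace_conj_unitary]
    push_cast [Function.comp_def]
    rfl
  -- support condition
  have hsupp' : ∀ j i, q j = 0 → p i * Pr i j = 0 := by
    intro j i hqj
    have hv : σ *ᵥ ⇑(hσ.1.eigenvectorBasis j) = 0 := by
      rw [hσ.1.mulVec_eigenvectorBasis]
      show (q j) • _ = _
      rw [hqj, zero_smul]
    have hρv : ρ *ᵥ ⇑(hσ.1.eigenvectorBasis j) = 0 := hsupp _ hv
    have hcol : ∀ k, (ρ * V) k j = 0 := by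
      intro k
      have : (ρ * V) k j = (ρ *ᵥ ⇑(hσ.1.eigenvectorBasis j)) k := by
        rw [Matrix.mul_apply, Matrix.mulVec]
        simp only [dotProduct]
        refine Finset.sum_congr rfl fun l _ => ?_
        rw [hVdef]
        rw [Matrix.IsHermitian.eigenvectorUnitary_apply]
      rw [this, hρv]
      rfl
    have hDW : (Matrix.diagonal (fun i => (p i : ℂ)) * W) i j = (Uᴴ * (ρ * V)) i j := by
      rw [hWdef, show Matrix.diagonal (fun i => (p i : ℂ)) * (Uᴴ * V)
          = (Matrix.diagonal (fun i => (p i : ℂ)) * Uᴴ) * V by rw [Matrix.mul_assoc],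
        show Uᴴ * (ρ * V) = (Uᴴ * ρ) * V by rw [Matrix.mul_assoc]]
      congr 1
      rw [hρspec, show Uᴴ * (U * Matrix.diagonal (fun i => (p i : ℂ)) * Uᴴ)
          = (Uᴴ * U) * Matrix.diagonal (fun i => (p i : ℂ)) * Uᴴ by simp only [Matrix.mul_assoc],
        hUU, Matrix.one_mul]
    have hzero : (p i : ℂ) * W i j = 0 := by
      rw [← Matrix.diagonal_mul (fun i => (p i : ℂ)) W i j, hDW, Matrix.mul_apply]
      exact Finset.sum_eq_zero fun k _ => by rw [hcol k, mul_zero]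
    rcases mul_eq_zero.mp hzero with h | h
    · have : p i = 0 := by exact_mod_cast h
      rw [this, zero_mul]
    · have : Pr i j = 0 := by rw [hPrdef]; simp [h]
      rw [this, mul_zero]
  -- Jensen setup
  set Treal : ℝ := ∑ i, ∑ j, Real.sqrt (p i) * Real.sqrt (q j) * Pr i j with hTrealdef
  set w : n × n → ℝ := fun x => p x.1 * Pr x.1 x.2 with hwdef
  set t : n × n → ℝ := fun x => Real.sqrt (q x.2) / Real.sqrt (p x.1) with htdef
  have hwnn : ∀ x, 0 ≤ w x := fun x => mul_nonneg (hpnn _) (hPrnn _ _)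
  have hw1 : ∑ x, w x = 1 := by
    rw [Fintype.sum_prod_type]
    calc ∑ i, ∑ j, w (i, j) = ∑ i, p i * ∑ j, Pr i j := by
          refine Finset.sum_congr rfl fun i _ => ?_
          rw [Finset.mul_sum]
      _ = 1 := by
          rw [← hpsum]
          exact Finset.sum_congr rfl fun i _ => by rw [hProw i, mul_one]
  have htnn : ∀ x, 0 ≤ t x := fun _ => div_nonneg (Real.sqrt_nonneg _) (Real.sqrt_nonneg _)
  have hppos : ∀ x : n × n, 0 < w x → 0 < p x.1 := by
    intro x hx
    rcases eq_or_lt_of_le (hpnn x.1) with h | h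
    · exfalso
      have : w x = 0 := by rw [hwdef]; simp only; rw [← h, zero_mul]
      rw [this] at hx; exact lt_irrefl _ hx
    · exact h
  have hPrpos : ∀ x : n × n, 0 < w x → 0 < Pr x.1 x.2 := by
    intro x hx
    rcases eq_or_lt_of_le (hPrnn x.1 x.2) with h | h
    · exfalso
      have : w x = 0 := by rw [hwdef]; simp only; rw [← h, mul_zero]
      rw [this] at hx; exact lt_irrefl _ hx
    · exact h
  have hqpos : ∀ x : n × n, 0 < w x → 0 < q x.2 := by
    intro x hx
    rcases eq_or_lt_of_le (hqnn x.2) with h | h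
    · exfalso
      have h0 := hsupp' x.2 x.1 h.symm
      have : w x = 0 := h0
      rw [this] at hx; exact lt_irrefl _ hx
    · exact h
  have htpos : ∀ x, 0 < w x → 0 < t x := fun x hx =>
    div_pos (Real.sqrt_pos.2 (hqpos x hx)) (Real.sqrt_pos.2 (hppos x hx))
  have hwt : ∑ x, w x * t x = Treal := by
    rw [Fintype.sum_prod_type, hTrealdef]
    refine Finset.sum_congr rfl fun i _ => Finset.sum_congr rfl fun j _ => ?_
    show p i * Pr i j * (Real.sqrt (q j) / Real.sqrt (p i)) = _
    rcases eq_or_lt_of_le (hpnn i) with h | h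
    · rw [← h]; simp
    · rw [show p i * Pr i j * (Real.sqrt (q j) / Real.sqrt (p i))
          = (p i / Real.sqrt (p i)) * Real.sqrt (q j) * Pr i j by ring, Real.div_sqrt]
  have hJ := jensen_log w t hwnn hw1 htnn htpos
  rw [hwt] at hJ
  have hJ2 : ∑ x, w x * ((Real.log (q x.2) - Real.log (p x.1)) / 2) ≤ Real.log Treal := by
    refine le_trans (le_of_eq ?_) hJ
    refine Finset.sum_congr rfl fun x _ => ?_
    rcases eq_or_lt_of_le (hwnn x) with h | h
    · rw [← h, zero_mul, zero_mul]
    · have hp := hppos x h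
      have hq := hqpos x h
      rw [show t x = Real.sqrt (q x.2) / Real.sqrt (p x.1) from rfl,
        Real.log_div (Real.sqrt_pos.2 hq).ne' (Real.sqrt_pos.2 hp).ne',
        Real.log_sqrt (hqnn x.2), Real.log_sqrt (hpnn x.1)]
      ring
  -- positivity of Treal
  have hTpos : 0 < Treal := by
    have hex : ∃ x : n × n, 0 < w x := by
      by_contra h
      push_neg at h
      have h0 : ∑ x, w x = 0 :=
        Finset.sum_eq_zero fun x _ => le_antisymm (h x) (hwnn x)
      rw [hw1] at h0
      norm_num at h0
    obtain ⟨x, hx⟩ := hex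
    rw [← hwt]
    exact Finset.sum_pos' (fun y _ => mul_nonneg (hwnn y) (htnn y))
      ⟨x, Finset.mem_univ x, mul_pos hx (htpos x hx)⟩
  -- the fidelity dominates Treal  (matrix part)
  have hTF : Treal ≤ ∑ k, Real.sqrt (m k) := by
    set Bm : Matrix n n ℂ := hρ.sqrt * hσ.sqrt with hBmdef
    set Vm : Matrix n n ℂ := ↑hM.1.eigenvectorUnitary with hVmdef
    have hVmU : Vm * Vmᴴ = 1 := by
      rw [hVmdef, ← Matrix.star_eq_conjTranspose]
      exact mem_unitaryGroup_iff.mp (SetLike.coe_mem _)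
    have hBB : Bmᴴ * Bm = hσ.sqrt * ρ * hσ.sqrt := by
      rw [hBmdef, Matrix.conjTranspose_mul, hρ.sqrt_isHermitian', hσ.sqrt_isHermitian',
        show hσ.sqrt * hρ.sqrt * (hρ.sqrt * hσ.sqrt)
          = hσ.sqrt * (hρ.sqrt * hρ.sqrt) * hσ.sqrt by simp only [Matrix.mul_assoc],
        hρ.sqrt_mul_self']
    set C : Matrix n n ℂ := Vmᴴ * Bm * Vm with hCdef
    have hCtr : C.trace = Bm.trace := by
      rw [hCdef, Matrix.trace_mul_cycle,
        show Vm * Vmᴴ * Bm = (Vm * Vmᴴ) * Bm by rw [Matrix.mul_assoc], hVmU, Matrix.one_mul]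
    have hCC : Cᴴ * C = Matrix.diagonal (fun k => (m k : ℂ)) := by
      have hdiag : Vmᴴ * (hσ.sqrt * ρ * hσ.sqrt) * Vm = Matrix.diagonal (fun k => (m k : ℂ)) := by
        simpa [Matrix.star_eq_conjTranspose, Function.comp_def]
          using hM.1.conjStarAlgAut_star_eigenvectorUnitary
      calc Cᴴ * C = Vmᴴ * (Bmᴴ * ((Vm * Vmᴴ) * (Bm * Vm))) := by
            rw [hCdef]
            simp only [Matrix.conjTranspose_mul, Matrix.conjTranspose_conjTranspose,
              Matrix.mul_assoc]
        _ = Vmᴴ * (Bmᴴ * (Bm * Vm)) := by rw [hVmU, Matrix.one_mul]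
        _ = Vmᴴ * (hσ.sqrt * ρ * hσ.sqrt) * Vm := by
            rw [← Matrix.mul_assoc Bmᴴ Bm Vm, hBB]
            simp only [Matrix.mul_assoc]
        _ = Matrix.diagonal (fun k => (m k : ℂ)) := hdiag
    have habs : ∀ k, ‖C k k‖ ≤ Real.sqrt (m k) := by
      intro k
      have h1 : ∑ i, Complex.normSq (C i k) = m k := by
        have h2 := congrFun (congrFun hCC k) k
        rw [Matrix.mul_apply] at h2
        simp only [Matrix.conjTranspose_apply, RCLike.star_def,
          Matrix.diagonal_apply_eq] at h2
        have h3 : ((∑ i, Complex.normSq (C i k) : ℝ) : ℂ) = ((m k : ℝ) : ℂ) := by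
          push_cast
          rw [← h2]
          exact Finset.sum_congr rfl fun i _ => by rw [mul_comm, Complex.mul_conj]
        exact_mod_cast h3
      have h3 : Complex.normSq (C k k) ≤ m k := by
        rw [← h1]
        exact Finset.single_le_sum (f := fun i => Complex.normSq (C i k))
          (fun i _ => Complex.normSq_nonneg _) (Finset.mem_univ k)
      calc ‖C k k‖ = Real.sqrt (Complex.normSq (C k k)) := Complex.norm_def _
        _ ≤ Real.sqrt (m k) := Real.sqrt_le_sqrt h3
    have h4 : Treal = (C.trace).re := by
      rw [hCtr, hBmdef, hT, Complex.ofReal_re]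
    rw [h4, Matrix.trace]
    rw [Complex.re_sum]
    refine Finset.sum_le_sum fun k _ => ?_
    exact (Complex.re_le_norm _).trans (habs k)
  -- final assembly
  rw [mul_sub, Matrix.trace_sub, Complex.sub_re, hA, hB, hF, Complex.ofReal_re,
    Complex.ofReal_re, Complex.ofReal_re]
  have hlog2 : (0:ℝ) < Real.log 2 := Real.log_pos one_lt_two
  have hlogb : Real.logb 2 Treal ≤ Real.logb 2 (∑ k, Real.sqrt (m k)) :=
    Real.logb_le_logb_of_le one_lt_two hTpos hTF
  have hAB : ((∑ i, p i * Real.logb 2 (p i)) - ∑ i, ∑ j, p i * Real.logb 2 (q j) * Pr i j)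
      * Real.log 2 = ∑ x : n × n, w x * (Real.log (p x.1) - Real.log (q x.2)) := by
    have e1 : ∑ i, p i * Real.logb 2 (p i) = ∑ x : n × n, w x * Real.logb 2 (p x.1) := by
      rw [Fintype.sum_prod_type]
      refine Finset.sum_congr rfl fun i _ => ?_
      calc p i * Real.logb 2 (p i) = (p i * Real.logb 2 (p i)) * ∑ j, Pr i j := by
            rw [hProw i, mul_one]
        _ = ∑ j, w (i, j) * Real.logb 2 (p i) := by
            rw [Finset.mul_sum]
            exact Finset.sum_congr rfl fun j _ => by show _ = p i * Pr i j * _; ring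
    have e2 : ∑ i, ∑ j, p i * Real.logb 2 (q j) * Pr i j
        = ∑ x : n × n, w x * Real.logb 2 (q x.2) := by
      rw [Fintype.sum_prod_type]
      exact Finset.sum_congr rfl fun i _ => Finset.sum_congr rfl fun j _ => by
        show _ = p i * Pr i j * _; ring
    rw [e1, e2, ← Finset.sum_sub_distrib, Finset.sum_mul]
    refine Finset.sum_congr rfl fun x _ => ?_
    rw [Real.logb, Real.logb]
    field_simp
  have hJ3 : -2 * Real.log Treal
      ≤ ((∑ i, p i * Real.logb 2 (p i)) - ∑ i, ∑ j, p i * Real.logb 2 (q j) * Pr i j)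
        * Real.log 2 := by
    rw [hAB]
    have : ∑ x : n × n, w x * (Real.log (p x.1) - Real.log (q x.2))
        = -2 * ∑ x : n × n, w x * ((Real.log (q x.2) - Real.log (p x.1)) / 2) := by
      rw [Finset.mul_sum]
      exact Finset.sum_congr rfl fun x _ => by ring
    rw [this]
    linarith [hJ2]
  calc -2 * Real.logb 2 (∑ k, Real.sqrt (m k)) ≤ -2 * Real.logb 2 Treal := by linarith [hlogb]
    _ = (-2 * Real.log Treal) / Real.log 2 := by rw [Real.logb]; ring
    _ ≤ (((∑ i, p i * Real.logb 2 (p i)) - ∑ i, ∑ j, p i * Real.logb 2 (q j) * Pr i j)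
          * Real.log 2) / Real.log 2 := by
        exact div_le_div_of_nonneg_right hJ3 hlog2.le
    _ = _ := by field_simp
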